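/- arXiv:2106.07815 — 2 statements merged into one kernel-verified Lean document; each statement's English description precedes it below -/
import Mathlib

section
/- Under independent uniform partitioning of n users into k groups, for any β' ∈ (0,1), with probability at least 1−β', Σ_{j=1}^k ‖f_j − f/k‖₂ ≤ √(nk) + √(2n ln(1/β')). -/
open Real

lemma hoeffding_core (p t : ℝ) (hp0 : 0 ≤ p) (hp1 : p ≤ 1) :
    1 - p + p * Real.exp t ≤ Real.exp (p * t + t ^ 2 / 8) := by
  have hD : ∀ s : ℝ, 0 < 1 - p + p * Real.exp s := by
    intro s
    have h := Real.exp_pos s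
    rcases le_total (Real.exp s) 1 with h1 | h1
    · nlinarith
    · nlinarith
  set q : ℝ → ℝ := fun s => p * Real.exp s / (1 - p + p * Real.exp s) with hqdef
  have hDd : ∀ s : ℝ, HasDerivAt (fun s => 1 - p + p * Real.exp s) (p * Real.exp s) s := by
    intro s
    simpa using ((Real.hasDerivAt_exp s).const_mul p).const_add (1 - p)
  have hq : ∀ s : ℝ, HasDerivAt q (q s * (1 - q s)) s := by
    intro s
    have h1 : HasDerivAt (fun s => p * Real.exp s) (p * Real.exp s) s :=
      (Real.hasDerivAt_exp s).const_mul p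
    have h := h1.div (hDd s) (hD s).ne'
    refine h.congr_deriv ?_
    have hDs := (hD s).ne'
    simp only [hqdef]
    field_simp
  set g : ℝ → ℝ := fun s => q s - p - s / 4 with hgdef
  have hg : ∀ s : ℝ, HasDerivAt g (q s * (1 - q s) - 1 / 4) s := by
    intro s
    have h4 : HasDerivAt (fun s : ℝ => s / 4) (1 / 4) s := by
      simpa using (hasDerivAt_id s).div_const 4
    exact ((hq s).sub_const p).sub h4
  have hganti : Antitone g := by
    apply antitone_of_deriv_nonpos
    · exact fun s => (hg s).differentiableAt
    · intro s
      rw [(hg s).deriv]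
      nlinarith [sq_nonneg (q s - 1 / 2)]
  have hq0 : q 0 = p := by
    simp only [hqdef, Real.exp_zero, mul_one]
    have : 1 - p + p = 1 := by ring
    rw [this, div_one]
  have hg0 : g 0 = 0 := by simp [hgdef, hq0]
  set f : ℝ → ℝ := fun s => Real.log (1 - p + p * Real.exp s) - p * s - s ^ 2 / 8 with hfdef
  have hf : ∀ s : ℝ, HasDerivAt f (g s) s := by
    intro s
    have hlog : HasDerivAt (fun s => Real.log (1 - p + p * Real.exp s)) (q s) s := by
      simpa [hqdef] using (hDd s).log (hD s).ne'
    have hps : HasDerivAt (fun s : ℝ => p * s) p s := by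
      simpa using (hasDerivAt_id s).const_mul p
    have hsq : HasDerivAt (fun s : ℝ => s ^ 2 / 8) (s / 4) s := by
      have := (hasDerivAt_pow 2 s).div_const 8
      refine this.congr_deriv ?_
      ring
    exact (hlog.sub hps).sub hsq
  have hfd : Differentiable ℝ f := fun s => (hf s).differentiableAt
  have hf0 : f 0 = 0 := by
    simp only [hfdef, Real.exp_zero, mul_one, mul_zero]
    have : 1 - p + p = 1 := by ring
    rw [this]
    simp
  have key : f t ≤ 0 := by
    rcases le_total 0 t with ht | ht
    · have : AntitoneOn f (Set.Ici 0) := by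
        apply antitoneOn_of_deriv_nonpos (convex_Ici 0) hfd.continuous.continuousOn
          (hfd.differentiableOn)
        intro x hx
        rw [interior_Ici] at hx
        rw [(hf x).deriv]
        have := hganti (le_of_lt hx)
        rw [hg0] at this
        exact this
      have := this (Set.self_mem_Ici) (Set.mem_Ici.2 ht) ht
      rwa [hf0] at this
    · have : MonotoneOn f (Set.Iic 0) := by
        apply monotoneOn_of_deriv_nonneg (convex_Iic 0) hfd.continuous.continuousOn
          (hfd.differentiableOn)
        intro x hx
        rw [interior_Iic] at hx
        rw [(hf x).deriv]
        have := hganti (le_of_lt hx)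
        rw [hg0] at this
        linarith
      have := this (Set.mem_Iic.2 ht) (Set.self_mem_Iic) ht
      rwa [hf0] at this
  have : Real.log (1 - p + p * Real.exp t) ≤ p * t + t ^ 2 / 8 := by
    have := key
    simp only [hfdef] at this
    linarith
  exact (Real.log_le_iff_le_exp (hD t)).1 this

lemma hoeffding_finite {ι : Type*} [Fintype ι] [Nonempty ι] (X : ι → ℝ) (c l : ℝ)
    (hc : ∀ i j, |X i - X j| ≤ c) :
    ∑ i, Real.exp (l * X i) ≤
      (Fintype.card ι : ℝ) *
        Real.exp (l * ((∑ i, X i) / (Fintype.card ι : ℝ)) + l ^ 2 * c ^ 2 / 8) := by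
  have m0 : (0:ℝ) < (Fintype.card ι : ℝ) := by exact_mod_cast Fintype.card_pos
  set m := ((Fintype.card ι : ℝ)) with hm
  obtain ⟨i₀, -, hi₀⟩ := Finset.exists_min_image Finset.univ X
    ⟨Classical.arbitrary ι, Finset.mem_univ _⟩
  set a := X i₀ with ha
  set S := ∑ i, X i with hS
  set μ := S / m with hμ
  have hcnn : 0 ≤ c := le_trans (abs_nonneg _) (hc i₀ i₀)
  have hlb : ∀ i, a ≤ X i := fun i => hi₀ i (Finset.mem_univ i)
  have hub : ∀ i, X i ≤ a + c := by
    intro i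
    have h := le_of_abs_le (hc i i₀)
    linarith
  have hSl : m * a ≤ S := by
    rw [hS]
    calc m * a = ∑ _i : ι, a := by
          rw [Finset.sum_const, Finset.card_univ, nsmul_eq_mul, hm]
      _ ≤ ∑ i, X i := Finset.sum_le_sum fun i _ => hlb i
  have hSu : S ≤ m * (a + c) := by
    rw [hS]
    calc ∑ i, X i ≤ ∑ _i : ι, (a + c) := Finset.sum_le_sum fun i _ => hub i
      _ = m * (a + c) := by rw [Finset.sum_const, Finset.card_univ, nsmul_eq_mul, hm]
  have hμa : a ≤ μ := by
    rw [hμ, le_div_iff₀ m0]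
    linarith
  have hμb : μ ≤ a + c := by
    rw [hμ, div_le_iff₀ m0]
    linarith
  rcases eq_or_lt_of_le hcnn with hc0 | hc0
  · -- c = 0 : all values equal
    have hX : ∀ i, X i = a := fun i => le_antisymm (by have := hub i; linarith) (hlb i)
    have hSa : S = m * a := by
      rw [hS]
      calc ∑ i, X i = ∑ _i : ι, a := Finset.sum_congr rfl fun i _ => hX i
        _ = m * a := by rw [Finset.sum_const, Finset.card_univ, nsmul_eq_mul, hm]
    have hμeq : μ = a := by rw [hμ, hSa, mul_div_cancel_left₀ _ m0.ne']
    calc ∑ i, Real.exp (l * X i) = ∑ _i : ι, Real.exp (l * a) :=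
          Finset.sum_congr rfl fun i _ => by rw [hX i]
      _ = m * Real.exp (l * a) := by rw [Finset.sum_const, Finset.card_univ, nsmul_eq_mul, hm]
      _ ≤ m * Real.exp (l * μ + l ^ 2 * c ^ 2 / 8) := by
          apply mul_le_mul_of_nonneg_left _ m0.le
          apply Real.exp_le_exp.2
          rw [hμeq]
          nlinarith [sq_nonneg (l * c)]
  · -- main case c > 0
    set E1 := Real.exp (l * a) with hE1
    set E2 := Real.exp (l * (a + c)) with hE2
    have hpt : ∀ i, Real.exp (l * X i) ≤ ((a + c - X i) * E1 + (X i - a) * E2) / c := by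
      intro i
      have θ1 : (0:ℝ) ≤ (a + c - X i) / c := div_nonneg (by linarith [hub i]) hc0.le
      have θ2 : (0:ℝ) ≤ (X i - a) / c := div_nonneg (by linarith [hlb i]) hc0.le
      have θsum : (a + c - X i) / c + (X i - a) / c = 1 := by field_simp; ring
      have hcx := convexOn_exp.2 (Set.mem_univ (l * a)) (Set.mem_univ (l * (a + c))) θ1 θ2 θsum
      simp only [smul_eq_mul] at hcx
      have harg : (a + c - X i) / c * (l * a) + (X i - a) / c * (l * (a + c)) = l * X i := by
        field_simp
        ring
      rw [harg] at hcx
      calc Real.exp (l * X i) ≤ (a + c - X i) / c * E1 + (X i - a) / c * E2 := hcx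
        _ = ((a + c - X i) * E1 + (X i - a) * E2) / c := by ring
    have hp0 : (0:ℝ) ≤ (μ - a) / c := div_nonneg (by linarith) hc0.le
    have hp1 : (μ - a) / c ≤ 1 := (div_le_one hc0).2 (by linarith)
    have hcore := hoeffding_core ((μ - a) / c) (l * c) hp0 hp1
    have hSm : S = m * μ := by rw [hμ]; field_simp
    have he2 : E2 = E1 * Real.exp (l * c) := by
      rw [hE1, hE2, ← Real.exp_add]
      ring_nf
    calc ∑ i, Real.exp (l * X i)
        ≤ ∑ i, ((a + c - X i) * E1 + (X i - a) * E2) / c :=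
          Finset.sum_le_sum fun i _ => hpt i
      _ = ((m * (a + c) - S) * E1 + (S - m * a) * E2) / c := by
          rw [← Finset.sum_div]
          congr 1
          rw [Finset.sum_add_distrib, ← Finset.sum_mul, ← Finset.sum_mul]
          congr 2
          · rw [Finset.sum_sub_distrib, Finset.sum_const, Finset.card_univ, nsmul_eq_mul, ← hS, hm]
          · rw [Finset.sum_sub_distrib, Finset.sum_const, Finset.card_univ, nsmul_eq_mul, ← hS, hm]
      _ ≤ m * Real.exp (l * μ + l ^ 2 * c ^ 2 / 8) := by
          rw [div_le_iff₀ hc0]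
          have h := mul_le_mul_of_nonneg_left hcore
            (show (0:ℝ) ≤ m * c * E1 by positivity)
          have hl : (m * (a + c) - S) * E1 + (S - m * a) * E2
              = m * c * E1 * (1 - (μ - a) / c + (μ - a) / c * Real.exp (l * c)) := by
            rw [hSm, he2]
            field_simp
            ring
          have hr : m * c * E1 * Real.exp ((μ - a) / c * (l * c) + (l * c) ^ 2 / 8)
              = m * Real.exp (l * μ + l ^ 2 * c ^ 2 / 8) * c := by
            have harg2 : (μ - a) / c * (l * c) + (l * c) ^ 2 / 8
                = l * (μ - a) + l ^ 2 * c ^ 2 / 8 := by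
              field_simp
            have hee : Real.exp (l * a) * Real.exp (l * (μ - a) + l ^ 2 * c ^ 2 / 8)
                = Real.exp (l * μ + l ^ 2 * c ^ 2 / 8) := by
              rw [← Real.exp_add]
              congr 1
              ring
            rw [harg2, hE1, mul_assoc, hee]
            ring
          rw [hl]
          calc m * c * E1 * (1 - (μ - a) / c + (μ - a) / c * Real.exp (l * c))
              ≤ m * c * E1 * Real.exp ((μ - a) / c * (l * c) + (l * c) ^ 2 / 8) := h
            _ = m * Real.exp (l * μ + l ^ 2 * c ^ 2 / 8) * c := hr


lemma sum_pi_cons {k n : ℕ} (H : (Fin (n+1) → Fin k) → ℝ) :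
    ∑ x, H x = ∑ a : Fin k, ∑ y : Fin n → Fin k, H (Fin.cons a y) := by
  rw [← (Fin.consEquiv (fun _ : Fin (n+1) => Fin k)).sum_comp H, Fintype.sum_prod_type]
  rfl

lemma mcdiarmid_mgf (k : ℕ) (hk : 0 < k) :
    ∀ (n : ℕ) (F : (Fin n → Fin k) → ℝ) (c l : ℝ),
      (∀ x u b, |F (Function.update x u b) - F x| ≤ c) →
      ∑ x, Real.exp (l * (F x - (∑ y, F y) / (k:ℝ) ^ n)) ≤
        (k:ℝ) ^ n * Real.exp (l ^ 2 * n * c ^ 2 / 8) := by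
  have hk0 : (0:ℝ) < (k:ℝ) := by exact_mod_cast hk
  haveI : Nonempty (Fin k) := ⟨⟨0, hk⟩⟩
  intro n
  induction n with
  | zero =>
    intro F c l hF
    have h1 : ∀ g : (Fin 0 → Fin k) → ℝ, ∑ x, g x = g Fin.elim0 := fun g =>
      Fintype.sum_subsingleton _ _
    rw [h1, h1]
    norm_num
  | succ n ih =>
    intro F c l hF
    set G : (Fin n → Fin k) → ℝ := fun y => (∑ a, F (Fin.cons a y)) / (k:ℝ) with hG
    have hGbd : ∀ y u b, |G (Function.update y u b) - G y| ≤ c := by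
      intro y u b
      have h1 : G (Function.update y u b) - G y
          = (∑ a, (F (Function.update (Fin.cons a y) u.succ b) - F (Fin.cons a y))) / (k:ℝ) := by
        rw [hG]
        simp only [div_sub_div_same]
        rw [← Finset.sum_sub_distrib]
        congr 1
        refine Finset.sum_congr rfl fun a _ => ?_
        rw [Fin.cons_update]
      rw [h1, abs_div, abs_of_pos hk0, div_le_iff₀ hk0]
      calc |∑ a, (F (Function.update (Fin.cons a y) u.succ b) - F (Fin.cons a y))|
          ≤ ∑ a, |F (Function.update (Fin.cons a y) u.succ b) - F (Fin.cons a y)| :=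
            Finset.abs_sum_le_sum_abs _ _
        _ ≤ ∑ _a : Fin k, c := Finset.sum_le_sum fun a _ => hF _ _ _
        _ = c * (k:ℝ) := by
            rw [Finset.sum_const, Finset.card_univ, Fintype.card_fin, nsmul_eq_mul]
            ring
    set EF := (∑ x, F x) / (k:ℝ) ^ (n+1) with hEF
    have hmean : (∑ y, G y) / (k:ℝ) ^ n = EF := by
      have h2 : ∑ y, G y = (∑ a, ∑ y : Fin n → Fin k, F (Fin.cons a y)) / (k:ℝ) := by
        rw [hG]
        rw [← Finset.sum_div]
        congr 1
        exact Finset.sum_comm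
      rw [h2, hEF, sum_pi_cons F, div_div]
      congr 1
      rw [pow_succ]
      ring
    have hperY : ∀ y : Fin n → Fin k,
        ∑ a, Real.exp (l * (F (Fin.cons a y) - EF))
          ≤ (k:ℝ) * Real.exp (l ^ 2 * c ^ 2 / 8) * Real.exp (l * (G y - EF)) := by
      intro y
      set X : Fin k → ℝ := fun a => F (Fin.cons a y) - G y with hX
      have hXc : ∀ a b, |X a - X b| ≤ c := by
        intro a b
        have hres := hF (Fin.cons b y) 0 a
        rw [Fin.update_cons_zero] at hres
        simpa [hX, sub_sub_sub_cancel_right] using hres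
      have hXm : ∑ a, X a = 0 := by
        simp only [hX]
        rw [Finset.sum_sub_distrib, Finset.sum_const, Finset.card_univ, Fintype.card_fin,
          nsmul_eq_mul, hG]
        field_simp
        ring
      have hhf := hoeffding_finite X c l hXc
      rw [hXm] at hhf
      simp only [Fintype.card_fin] at hhf
      have hsplitexp : ∀ a : Fin k,
          Real.exp (l * (F (Fin.cons a y) - EF)) = Real.exp (l * X a) * Real.exp (l * (G y - EF)) := by
        intro a
        rw [← Real.exp_add]
        congr 1
        simp only [hX]
        ring
      calc ∑ a, Real.exp (l * (F (Fin.cons a y) - EF))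
          = (∑ a, Real.exp (l * X a)) * Real.exp (l * (G y - EF)) := by
            rw [Finset.sum_mul]
            exact Finset.sum_congr rfl fun a _ => hsplitexp a
        _ ≤ ((k:ℝ) * Real.exp (l * (0 / (k:ℝ)) + l ^ 2 * c ^ 2 / 8)) * Real.exp (l * (G y - EF)) := by
            apply mul_le_mul_of_nonneg_right hhf (Real.exp_nonneg _)
        _ = (k:ℝ) * Real.exp (l ^ 2 * c ^ 2 / 8) * Real.exp (l * (G y - EF)) := by
            rw [zero_div, mul_zero, zero_add]
    have hihG := ih G c l hGbd
    rw [hmean] at hihG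
    calc ∑ x, Real.exp (l * (F x - EF))
        = ∑ a, ∑ y, Real.exp (l * (F (Fin.cons a y) - EF)) :=
          sum_pi_cons (fun x => Real.exp (l * (F x - EF)))
      _ = ∑ y, ∑ a, Real.exp (l * (F (Fin.cons a y) - EF)) := Finset.sum_comm
      _ ≤ ∑ y, (k:ℝ) * Real.exp (l ^ 2 * c ^ 2 / 8) * Real.exp (l * (G y - EF)) :=
          Finset.sum_le_sum fun y _ => hperY y
      _ = (k:ℝ) * Real.exp (l ^ 2 * c ^ 2 / 8) * ∑ y, Real.exp (l * (G y - EF)) := by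
          rw [Finset.mul_sum]
      _ ≤ (k:ℝ) * Real.exp (l ^ 2 * c ^ 2 / 8) * ((k:ℝ) ^ n * Real.exp (l ^ 2 * n * c ^ 2 / 8)) := by
          apply mul_le_mul_of_nonneg_left hihG (by positivity)
      _ = (k:ℝ) ^ (n+1) * Real.exp (l ^ 2 * ((n:ℕ)+1 : ℕ) * c ^ 2 / 8) := by
          push_cast
          have hee : Real.exp (l^2*c^2/8) * Real.exp (l^2*(n:ℝ)*c^2/8)
              = Real.exp (l^2*((n:ℝ)+1)*c^2/8) := by
            rw [← Real.exp_add]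
            congr 1
            ring
          calc (k:ℝ) * Real.exp (l^2*c^2/8) * ((k:ℝ)^n * Real.exp (l^2*(n:ℝ)*c^2/8))
              = ((k:ℝ) * (k:ℝ)^n) * (Real.exp (l^2*c^2/8) * Real.exp (l^2*(n:ℝ)*c^2/8)) := by
                ring
            _ = (k:ℝ)^(n+1) * Real.exp (l^2*((n:ℝ)+1)*c^2/8) := by
                rw [hee, pow_succ]
                ring

lemma mcdiarmid_count (n k : ℕ) (hk : 0 < k) (hn : 0 < n)
    (F : (Fin n → Fin k) → ℝ)
    (hF : ∀ x u b, |F (Function.update x u b) - F x| ≤ 2)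
    (t : ℝ) (ht : 0 < t) :
    ((Finset.univ.filter fun x : Fin n → Fin k =>
        t ≤ F x - (∑ y, F y) / (k:ℝ) ^ n).card : ℝ)
      ≤ (k:ℝ) ^ n * Real.exp (-t ^ 2 / (2 * n)) := by
  classical
  set EF := (∑ y, F y) / (k:ℝ) ^ n with hEF
  have hn0 : (0:ℝ) < (n:ℝ) := by exact_mod_cast hn
  set l := t / (n:ℝ) with hl
  have hl0 : 0 < l := div_pos ht hn0
  have hmgf := mcdiarmid_mgf k hk n F 2 l hF
  set s := Finset.univ.filter fun x : Fin n → Fin k => t ≤ F x - EF with hs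
  have h1 : (s.card : ℝ) * Real.exp (l * t) ≤ ∑ x, Real.exp (l * (F x - EF)) := by
    calc (s.card : ℝ) * Real.exp (l * t) = ∑ _x ∈ s, Real.exp (l * t) := by
          rw [Finset.sum_const, nsmul_eq_mul]
      _ ≤ ∑ x ∈ s, Real.exp (l * (F x - EF)) := by
          apply Finset.sum_le_sum
          intro x hx
          apply Real.exp_le_exp.2
          exact mul_le_mul_of_nonneg_left (Finset.mem_filter.1 hx).2 hl0.le
      _ ≤ ∑ x, Real.exp (l * (F x - EF)) :=
          Finset.sum_le_sum_of_subset_of_nonneg (Finset.filter_subset _ _)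
            (fun _ _ _ => Real.exp_nonneg _)
  have h2 : (s.card : ℝ) * Real.exp (l * t) ≤ (k:ℝ) ^ n * Real.exp (l ^ 2 * n * 2 ^ 2 / 8) :=
    le_trans h1 hmgf
  have h3 : (s.card : ℝ) ≤ (k:ℝ) ^ n * Real.exp (l ^ 2 * n * 2 ^ 2 / 8) * Real.exp (-(l * t)) := by
    calc (s.card : ℝ) = (s.card : ℝ) * Real.exp (l * t) * Real.exp (-(l * t)) := by
          rw [mul_assoc, ← Real.exp_add]
          simp
      _ ≤ (k:ℝ) ^ n * Real.exp (l ^ 2 * n * 2 ^ 2 / 8) * Real.exp (-(l * t)) :=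
          mul_le_mul_of_nonneg_right h2 (Real.exp_nonneg _)
  calc (s.card : ℝ) ≤ (k:ℝ) ^ n * Real.exp (l ^ 2 * n * 2 ^ 2 / 8) * Real.exp (-(l * t)) := h3
    _ = (k:ℝ) ^ n * Real.exp (-t ^ 2 / (2 * n)) := by
        rw [mul_assoc, ← Real.exp_add]
        congr 2
        rw [hl]
        field_simp
        ring

lemma sum_pi_single {n k : ℕ} (u : Fin n) (g : Fin k → ℝ) :
    ∑ x : Fin n → Fin k, g (x u) = (k:ℝ) ^ (n - 1) * ∑ i, g i := by
  classical
  set f : Fin n → Fin k → ℝ := fun i a => if i = u then g a else 1 with hf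
  have key := Finset.prod_univ_sum (fun _ : Fin n => (Finset.univ : Finset (Fin k))) f
  rw [Fintype.piFinset_univ] at key
  have hx : ∀ x : Fin n → Fin k, ∏ i, f i (x i) = g (x u) := by
    intro x
    rw [← Finset.prod_subset (Finset.subset_univ ({u} : Finset (Fin n)))
      (fun i _ hi => by
        simp only [Finset.mem_singleton] at hi
        simp [hf, hi])]
    simp [hf]
  have hcol : ∀ i : Fin n, (∑ a, f i a) = if i = u then ∑ a, g a else (k:ℝ) := by
    intro i
    by_cases h1 : i = u
    · simp [hf, h1]
    · simp [hf, h1, Finset.sum_const, Finset.card_univ, Fintype.card_fin]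
  have hleft : ∏ i, (∑ a, f i a) = (k:ℝ) ^ (n - 1) * ∑ i, g i := by
    rw [Finset.prod_congr rfl (fun i _ => hcol i)]
    rw [← Finset.prod_mul_prod_compl ({u} : Finset (Fin n))]
    have hp1 : ∏ i ∈ ({u} : Finset (Fin n)), (if i = u then ∑ a, g a else (k:ℝ)) = ∑ a, g a := by
      simp
    have hp2 : ∏ i ∈ ({u} : Finset (Fin n))ᶜ, (if i = u then ∑ a, g a else (k:ℝ))
        = (k:ℝ) ^ (n - 1) := by
      have hone : ∀ i ∈ ({u} : Finset (Fin n))ᶜ,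
          (if i = u then ∑ a, g a else (k:ℝ)) = (k:ℝ) := by
        intro i hi
        simp only [Finset.mem_compl, Finset.mem_singleton] at hi
        simp [hi]
      rw [Finset.prod_congr rfl hone, Finset.prod_const, Finset.card_compl, Fintype.card_fin,
        Finset.card_singleton]
    rw [hp1, hp2]
    ring
  calc ∑ x : Fin n → Fin k, g (x u) = ∑ x : Fin n → Fin k, ∏ i, f i (x i) :=
        (Finset.sum_congr rfl fun x _ => (hx x).symm)
    _ = ∏ i, (∑ a, f i a) := key.symm
    _ = (k:ℝ) ^ (n - 1) * ∑ i, g i := hleft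

lemma sum_pi_pair {n k : ℕ} {u u' : Fin n} (huu : u ≠ u') (g h : Fin k → ℝ) :
    ∑ x : Fin n → Fin k, g (x u) * h (x u') = (k:ℝ) ^ (n - 2) * (∑ i, g i) * (∑ i, h i) := by
  classical
  set f : Fin n → Fin k → ℝ := fun i a => if i = u then g a else if i = u' then h a else 1 with hf
  have key := Finset.prod_univ_sum (fun _ : Fin n => (Finset.univ : Finset (Fin k))) f
  rw [Fintype.piFinset_univ] at key
  have hx : ∀ x : Fin n → Fin k, ∏ i, f i (x i) = g (x u) * h (x u') := by
    intro x
    rw [← Finset.prod_subset (Finset.subset_univ ({u, u'} : Finset (Fin n)))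
      (fun i _ hi => by
        simp only [Finset.mem_insert, Finset.mem_singleton, not_or] at hi
        simp [hf, hi.1, hi.2])]
    rw [Finset.prod_pair huu]
    simp [hf, huu, Ne.symm huu]
  have hcol : ∀ i : Fin n, (∑ a, f i a)
      = if i = u then ∑ a, g a else if i = u' then ∑ a, h a else (k:ℝ) := by
    intro i
    by_cases h1 : i = u
    · simp [hf, h1]
    · by_cases h2 : i = u'
      · simp [hf, h1, h2]
      · simp [hf, h1, h2, Finset.sum_const, Finset.card_univ, Fintype.card_fin]
  have hleft : ∏ i, (∑ a, f i a) = (k:ℝ) ^ (n - 2) * (∑ i, g i) * (∑ i, h i) := by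
    rw [Finset.prod_congr rfl (fun i _ => hcol i)]
    rw [← Finset.prod_mul_prod_compl ({u, u'} : Finset (Fin n))]
    have hp1 : ∏ i ∈ ({u, u'} : Finset (Fin n)),
        (if i = u then ∑ a, g a else if i = u' then ∑ a, h a else (k:ℝ))
        = (∑ i, g i) * (∑ i, h i) := by
      rw [Finset.prod_pair huu]
      simp [huu, Ne.symm huu]
    have hp2 : ∏ i ∈ ({u, u'} : Finset (Fin n))ᶜ,
        (if i = u then ∑ a, g a else if i = u' then ∑ a, h a else (k:ℝ))
        = (k:ℝ) ^ (n - 2) := by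
      have hone : ∀ i ∈ ({u, u'} : Finset (Fin n))ᶜ,
          (if i = u then ∑ a, g a else if i = u' then ∑ a, h a else (k:ℝ)) = (k:ℝ) := by
        intro i hi
        simp only [Finset.mem_compl, Finset.mem_insert, Finset.mem_singleton, not_or] at hi
        simp [hi.1, hi.2]
      rw [Finset.prod_congr rfl hone, Finset.prod_const, Finset.card_compl, Fintype.card_fin,
        Finset.card_pair huu]
    rw [hp1, hp2]
    ring
  calc ∑ x : Fin n → Fin k, g (x u) * h (x u') = ∑ x : Fin n → Fin k, ∏ i, f i (x i) :=
        (Finset.sum_congr rfl fun x _ => (hx x).symm)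
    _ = ∏ i, (∑ a, f i a) := key.symm
    _ = (k:ℝ) ^ (n - 2) * (∑ i, g i) * (∑ i, h i) := hleft

noncomputable def Fdelta (n k : ℕ) {D : Type*} [Fintype D] [DecidableEq D] (v : Fin n → D)
    (x : Fin n → Fin k) : ℝ :=
  ∑ j : Fin k, Real.sqrt (∑ w : D,
    (((Finset.univ.filter fun u => x u = j ∧ v u = w).card : ℝ) -
      ((Finset.univ.filter fun u => v u = w).card : ℝ) / k) ^ 2)

lemma count_sub_eq {n k : ℕ} {D : Type*} [Fintype D] [DecidableEq D] (v : Fin n → D)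
    (x : Fin n → Fin k) (j : Fin k) (w : D) :
    ((Finset.univ.filter fun u => x u = j ∧ v u = w).card : ℝ) -
      ((Finset.univ.filter fun u => v u = w).card : ℝ) / k
    = ∑ u ∈ Finset.univ.filter (fun u => v u = w),
        ((if x u = j then (1:ℝ) else 0) - 1 / k) := by
  classical
  have hset : Finset.univ.filter (fun u => x u = j ∧ v u = w)
      = (Finset.univ.filter (fun u => v u = w)).filter (fun u => x u = j) := by
    rw [Finset.filter_filter]
    apply Finset.filter_congr
    intro u _
    simp [and_comm]
  rw [hset, Finset.sum_sub_distrib]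
  congr 1
  · exact (Finset.sum_boole _ _).symm
  · rw [Finset.sum_const, nsmul_eq_mul]
    ring

lemma fiber_sq_bound {n k : ℕ} (hk : 0 < k) {D : Type*} [Fintype D] [DecidableEq D]
    (v : Fin n → D) (j : Fin k) (w : D) :
    ∑ x : Fin n → Fin k, (∑ u ∈ Finset.univ.filter (fun u => v u = w),
        ((if x u = j then (1:ℝ) else 0) - 1 / k)) ^ 2
      ≤ ((Finset.univ.filter fun u : Fin n => v u = w).card : ℝ) * (k:ℝ) ^ (n - 1) := by
  classical
  have hk0 : (0:ℝ) < (k:ℝ) := by exact_mod_cast hk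
  set e : Fin k → ℝ := fun i => (if i = j then (1:ℝ) else 0) - 1 / k with he
  set S := Finset.univ.filter (fun u : Fin n => v u = w) with hS
  have he0 : ∑ i, e i = 0 := by
    simp only [he]
    rw [Finset.sum_sub_distrib, Finset.sum_ite_eq' Finset.univ j (fun _ => (1:ℝ)),
      Finset.sum_const, Finset.card_univ, Fintype.card_fin, nsmul_eq_mul]
    simp only [Finset.mem_univ, if_pos]
    field_simp
    ring
  have he2 : ∑ i, e i ^ 2 ≤ 1 := by
    have hsq : ∀ i : Fin k, e i ^ 2
        = (if i = j then (1:ℝ) else 0) - 2 / k * (if i = j then (1:ℝ) else 0) + 1 / k ^ 2 := by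
      intro i
      by_cases h : i = j <;> simp only [he, h, if_pos, if_neg, ite_true, ite_false] <;> ring
    rw [Finset.sum_congr rfl (fun i _ => hsq i), Finset.sum_add_distrib, Finset.sum_sub_distrib,
      ← Finset.mul_sum, Finset.sum_ite_eq' Finset.univ j (fun _ => (1:ℝ)),
      Finset.sum_const, Finset.card_univ, Fintype.card_fin, nsmul_eq_mul]
    simp only [Finset.mem_univ, if_pos]
    have h1 : (0:ℝ) < 1 / (k:ℝ) := by positivity
    have h2 : (k:ℝ) * (1 / (k:ℝ) ^ 2) = 1 / k := by field_simp
    rw [h2]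
    have : 2 / (k:ℝ) * 1 = 2 * (1 / k) := by ring
    rw [this]
    linarith
  have hexp : ∀ x : Fin n → Fin k,
      (∑ u ∈ S, e (x u)) ^ 2 = ∑ u ∈ S, ∑ u' ∈ S, e (x u) * e (x u') := by
    intro x
    rw [sq, Finset.sum_mul_sum]
  rw [Finset.sum_congr rfl (fun x (_ : x ∈ Finset.univ) => hexp x), Finset.sum_comm]
  have hinner : ∀ u ∈ S, (∑ x : Fin n → Fin k, ∑ u' ∈ S, e (x u) * e (x u')) ≤ (k:ℝ) ^ (n - 1) := by
    intro u hu
    rw [Finset.sum_comm]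
    have hterm : ∀ u' ∈ S, (∑ x : Fin n → Fin k, e (x u) * e (x u'))
        = if u' = u then (k:ℝ) ^ (n - 1) * ∑ i, e i ^ 2 else 0 := by
      intro u' _
      by_cases h : u' = u
      · subst h
        rw [if_pos rfl]
        have hsingle := sum_pi_single (n := n) (k := k) u' (fun i => e i * e i)
        calc ∑ x : Fin n → Fin k, e (x u') * e (x u')
            = (k:ℝ) ^ (n - 1) * ∑ i, e i * e i := hsingle
          _ = (k:ℝ) ^ (n - 1) * ∑ i, e i ^ 2 := by
              congr 1
              exact Finset.sum_congr rfl fun i _ => (sq (e i)).symm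
      · rw [if_neg h, sum_pi_pair (Ne.symm h) e e, he0]
        ring
    rw [Finset.sum_congr rfl hterm,
      Finset.sum_ite_eq' S u (fun _ => (k:ℝ) ^ (n - 1) * ∑ i, e i ^ 2), if_pos hu]
    have hknn : (0:ℝ) ≤ (k:ℝ) ^ (n - 1) := by positivity
    nlinarith
  calc ∑ u ∈ S, ∑ x : Fin n → Fin k, ∑ u' ∈ S, e (x u) * e (x u')
      ≤ ∑ _u ∈ S, (k:ℝ) ^ (n - 1) := Finset.sum_le_sum hinner
    _ = (S.card : ℝ) * (k:ℝ) ^ (n - 1) := by rw [Finset.sum_const, nsmul_eq_mul]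

lemma exp_Fdelta_le {n k : ℕ} (hk : 0 < k) (hn : 0 < n) {D : Type*} [Fintype D] [DecidableEq D]
    (v : Fin n → D) :
    ∑ x : Fin n → Fin k, Fdelta n k v x ≤ (k:ℝ) ^ n * Real.sqrt ((n:ℝ) * k) := by
  classical
  have hk0 : (0:ℝ) ≤ (k:ℝ) := by positivity
  set Q : Fin k → (Fin n → Fin k) → ℝ := fun j x => ∑ w : D,
    (((Finset.univ.filter fun u => x u = j ∧ v u = w).card : ℝ) -
      ((Finset.univ.filter fun u => v u = w).card : ℝ) / k) ^ 2 with hQ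
  have hQnn : ∀ j x, 0 ≤ Q j x := fun j x => Finset.sum_nonneg fun w _ => sq_nonneg _
  have hQsum : ∀ j : Fin k, ∑ x : Fin n → Fin k, Q j x ≤ (n:ℝ) * (k:ℝ) ^ (n - 1) := by
    intro j
    rw [Finset.sum_comm]
    have hw : ∀ w ∈ (Finset.univ : Finset D), (∑ x : Fin n → Fin k,
        (((Finset.univ.filter fun u => x u = j ∧ v u = w).card : ℝ) -
          ((Finset.univ.filter fun u => v u = w).card : ℝ) / k) ^ 2)
        ≤ ((Finset.univ.filter fun u : Fin n => v u = w).card : ℝ) * (k:ℝ) ^ (n - 1) := by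
      intro w _
      calc ∑ x : Fin n → Fin k, (((Finset.univ.filter fun u => x u = j ∧ v u = w).card : ℝ) -
              ((Finset.univ.filter fun u => v u = w).card : ℝ) / k) ^ 2
          = ∑ x : Fin n → Fin k, (∑ u ∈ Finset.univ.filter (fun u => v u = w),
              ((if x u = j then (1:ℝ) else 0) - 1 / k)) ^ 2 :=
            Finset.sum_congr rfl fun x _ => by rw [count_sub_eq]
        _ ≤ _ := fiber_sq_bound hk v j w
    calc ∑ w : D, ∑ x : Fin n → Fin k, _ ≤ ∑ w : D,
          ((Finset.univ.filter fun u : Fin n => v u = w).card : ℝ) * (k:ℝ) ^ (n - 1) :=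
            Finset.sum_le_sum hw
      _ = (n:ℝ) * (k:ℝ) ^ (n - 1) := by
          rw [← Finset.sum_mul]
          congr 1
          have hcard := Finset.card_eq_sum_card_fiberwise
            (f := v) (s := (Finset.univ : Finset (Fin n))) (t := (Finset.univ : Finset D))
            (fun x _ => Finset.mem_univ _)
          rw [Finset.card_univ, Fintype.card_fin] at hcard
          exact_mod_cast congrArg (Nat.cast : ℕ → ℝ) hcard.symm
  have hCS : ∀ j : Fin k, ∑ x : Fin n → Fin k, Real.sqrt (Q j x)
      ≤ Real.sqrt ((k:ℝ) ^ n * ((n:ℝ) * (k:ℝ) ^ (n - 1))) := by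
    intro j
    have hcs := Finset.sum_mul_sq_le_sq_mul_sq (Finset.univ : Finset (Fin n → Fin k))
      (fun _ => (1:ℝ)) (fun x => Real.sqrt (Q j x))
    simp only [one_mul, one_pow] at hcs
    -- hcs : (∑ √Q)² ≤ (∑ 1) * ∑ (√Q)²
    have hsq : ∑ x : Fin n → Fin k, Real.sqrt (Q j x) ^ 2 = ∑ x, Q j x :=
      Finset.sum_congr rfl fun x _ => Real.sq_sqrt (hQnn j x)
    rw [hsq, Finset.sum_const, Finset.card_univ, nsmul_eq_mul] at hcs
    have hcardpi : (Fintype.card (Fin n → Fin k) : ℝ) = (k:ℝ) ^ n := by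
      rw [Fintype.card_fun]
      push_cast
      simp
    rw [hcardpi] at hcs
    have hnn : (0:ℝ) ≤ ∑ x : Fin n → Fin k, Real.sqrt (Q j x) :=
      Finset.sum_nonneg fun x _ => Real.sqrt_nonneg _
    have hb : ((∑ x : Fin n → Fin k, Real.sqrt (Q j x)) : ℝ) ^ 2
        ≤ (k:ℝ) ^ n * ((n:ℝ) * (k:ℝ) ^ (n - 1)) := by
      calc (∑ x : Fin n → Fin k, Real.sqrt (Q j x)) ^ 2
            ≤ (k:ℝ) ^ n * 1 * (∑ x, Q j x) := hcs
        _ = (k:ℝ) ^ n * (∑ x, Q j x) := by rw [mul_one]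
        _ ≤ (k:ℝ) ^ n * ((n:ℝ) * (k:ℝ) ^ (n - 1)) :=
            mul_le_mul_of_nonneg_left (hQsum j) (by positivity)
    have := Real.sqrt_le_sqrt hb
    rwa [Real.sqrt_sq hnn] at this
  have hfinal : (k:ℝ) * Real.sqrt ((k:ℝ) ^ n * ((n:ℝ) * (k:ℝ) ^ (n - 1)))
      = (k:ℝ) ^ n * Real.sqrt ((n:ℝ) * k) := by
    have hkpow : (k:ℝ) ^ (n - 1) * (k:ℝ) = (k:ℝ) ^ n := by
      rw [← pow_succ, Nat.sub_add_cancel hn]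
    have h1 : (k:ℝ) * Real.sqrt ((k:ℝ) ^ n * ((n:ℝ) * (k:ℝ) ^ (n - 1)))
        = Real.sqrt ((k:ℝ) ^ 2 * ((k:ℝ) ^ n * ((n:ℝ) * (k:ℝ) ^ (n - 1)))) := by
      rw [Real.sqrt_mul (sq_nonneg _), Real.sqrt_sq hk0]
    have h2 : (k:ℝ) ^ 2 * ((k:ℝ) ^ n * ((n:ℝ) * (k:ℝ) ^ (n - 1)))
        = ((k:ℝ) ^ n) ^ 2 * ((n:ℝ) * (k:ℝ)) := by
      linear_combination ((n:ℝ) * (k:ℝ) * (k:ℝ) ^ n) * hkpow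
    rw [h1, h2, Real.sqrt_mul (sq_nonneg _), Real.sqrt_sq (by positivity)]
  calc ∑ x : Fin n → Fin k, Fdelta n k v x
      = ∑ j : Fin k, ∑ x : Fin n → Fin k, Real.sqrt (Q j x) := Finset.sum_comm
    _ ≤ ∑ _j : Fin k, Real.sqrt ((k:ℝ) ^ n * ((n:ℝ) * (k:ℝ) ^ (n - 1))) :=
        Finset.sum_le_sum fun j _ => hCS j
    _ = (k:ℝ) * Real.sqrt ((k:ℝ) ^ n * ((n:ℝ) * (k:ℝ) ^ (n - 1))) := by
        rw [Finset.sum_const, Finset.card_univ, Fintype.card_fin, nsmul_eq_mul]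
    _ = (k:ℝ) ^ n * Real.sqrt ((n:ℝ) * k) := hfinal

lemma sqrt_sum_sq_sub {D : Type*} [Fintype D] (A B : D → ℝ) :
    |Real.sqrt (∑ w, A w ^ 2) - Real.sqrt (∑ w, B w ^ 2)| ≤ Real.sqrt (∑ w, (A w - B w) ^ 2) := by
  have key := abs_norm_sub_norm_le
    (((WithLp.equiv 2 (D → ℝ)).symm A : EuclideanSpace ℝ D))
    (((WithLp.equiv 2 (D → ℝ)).symm B : EuclideanSpace ℝ D))
  have hsub : ((WithLp.equiv 2 (D → ℝ)).symm A : EuclideanSpace ℝ D) -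
      ((WithLp.equiv 2 (D → ℝ)).symm B : EuclideanSpace ℝ D)
      = ((WithLp.equiv 2 (D → ℝ)).symm (A - B) : EuclideanSpace ℝ D) := rfl
  rw [hsub] at key
  simp only [EuclideanSpace.norm_eq, WithLp.equiv_symm_apply, PiLp.toLp_apply, Real.norm_eq_abs, sq_abs,
    Pi.sub_apply] at key
  exact key

lemma Fdelta_bd {n k : ℕ} {D : Type*} [Fintype D] [DecidableEq D] (v : Fin n → D) :
    ∀ (x : Fin n → Fin k) (u : Fin n) (b : Fin k),
      |Fdelta n k v (Function.update x u b) - Fdelta n k v x| ≤ 2 := by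
  classical
  intro x u b
  set x' := Function.update x u b with hx'
  set f : D → ℝ := fun w => ((Finset.univ.filter fun u₂ => v u₂ = w).card : ℝ) with hfw
  set cnt : (Fin n → Fin k) → Fin k → D → ℝ := fun y j w =>
    ((Finset.univ.filter fun u₂ => y u₂ = j ∧ v u₂ = w).card : ℝ) with hcnt
  set δ : Fin k → D → ℝ := fun j w =>
    (if b = j ∧ v u = w then (1:ℝ) else 0) - (if x u = j ∧ v u = w then (1:ℝ) else 0) with hδ
  have hdiff : ∀ j w, cnt x' j w - cnt x j w = δ j w := by
    intro j w
    have h1 : cnt x' j w = ∑ u₂ : Fin n, (if x' u₂ = j ∧ v u₂ = w then (1:ℝ) else 0) := by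
      simp only [hcnt]
      exact (Finset.sum_boole _ _).symm
    have h2 : cnt x j w = ∑ u₂ : Fin n, (if x u₂ = j ∧ v u₂ = w then (1:ℝ) else 0) := by
      simp only [hcnt]
      exact (Finset.sum_boole _ _).symm
    rw [h1, h2, ← Finset.sum_sub_distrib, Finset.sum_eq_single u]
    · simp only [hδ, hx', Function.update_self]
    · intro u₂ _ hne
      simp only [hx', Function.update_of_ne hne, sub_self]
    · intro h
      exact absurd (Finset.mem_univ u) h
  set N : (Fin n → Fin k) → Fin k → ℝ := fun y j =>
    Real.sqrt (∑ w : D, (cnt y j w - f w / k) ^ 2) with hN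
  have hFd : ∀ y, Fdelta n k v y = ∑ j, N y j := fun y => rfl
  have hNd : ∀ j, |N x' j - N x j| ≤ Real.sqrt (∑ w : D, δ j w ^ 2) := by
    intro j
    have hkey := sqrt_sum_sq_sub (fun w => cnt x' j w - f w / k) (fun w => cnt x j w - f w / k)
    have harg : ∀ w : D, ((cnt x' j w - f w / k) - (cnt x j w - f w / k)) = δ j w := by
      intro w
      calc (cnt x' j w - f w / k) - (cnt x j w - f w / k) = cnt x' j w - cnt x j w := by ring
        _ = δ j w := hdiff j w
    simp only [harg] at hkey
    exact hkey
  have hδsq : ∀ j, ∑ w : D, δ j w ^ 2 ≤ 1 := by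
    intro j
    have hpt : ∀ w : D, δ j w ^ 2 ≤ (if v u = w then (1:ℝ) else 0) := by
      intro w
      by_cases hw : v u = w
      · simp only [hδ, hw, and_true, if_pos]
        by_cases h1 : b = j <;> by_cases h2 : x u = j <;> simp [h1, h2] <;> norm_num
      · simp [hδ, hw]
    calc ∑ w, δ j w ^ 2 ≤ ∑ w, (if v u = w then (1:ℝ) else 0) :=
          Finset.sum_le_sum fun w _ => hpt w
      _ = 1 := by simp
  have hNd1 : ∀ j, |N x' j - N x j| ≤ 1 := by
    intro j
    refine le_trans (hNd j) ?_
    have := Real.sqrt_le_sqrt (hδsq j)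
    simpa using this
  have hNzero : ∀ j, j ≠ b → j ≠ x u → N x' j = N x j := by
    intro j hjb hjx
    simp only [hN]
    congr 1
    apply Finset.sum_congr rfl
    intro w _
    have hz : δ j w = 0 := by
      have hc1 : ¬(b = j ∧ v u = w) := fun h => hjb h.1.symm
      have hc2 : ¬(x u = j ∧ v u = w) := fun h => hjx h.1.symm
      simp [hδ, hc1, hc2]
    have he := hdiff j w
    rw [hz] at he
    have : cnt x' j w = cnt x j w := by linarith
    rw [this]
  have hmain : |∑ j, (N x' j - N x j)| ≤ 2 := by
    calc |∑ j, (N x' j - N x j)| ≤ ∑ j, |N x' j - N x j| := Finset.abs_sum_le_sum_abs _ _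
      _ = ∑ j ∈ ({b, x u} : Finset (Fin k)), |N x' j - N x j| := by
          symm
          apply Finset.sum_subset (Finset.subset_univ _)
          intro j _ hj
          simp only [Finset.mem_insert, Finset.mem_singleton, not_or] at hj
          rw [hNzero j hj.1 hj.2, sub_self, abs_zero]
      _ ≤ ∑ _j ∈ ({b, x u} : Finset (Fin k)), (1:ℝ) := Finset.sum_le_sum fun j _ => hNd1 j
      _ = (({b, x u} : Finset (Fin k)).card : ℝ) := by
          rw [Finset.sum_const, nsmul_eq_mul, mul_one]
      _ ≤ 2 := by
          have h2 : ({b, x u} : Finset (Fin k)).card ≤ 2 :=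
            le_trans (Finset.card_insert_le b ({x u} : Finset (Fin k))) (by simp)
          exact_mod_cast h2
  calc |Fdelta n k v x' - Fdelta n k v x| = |∑ j, (N x' j - N x j)| := by
        rw [hFd x', hFd x, ← Finset.sum_sub_distrib]
    _ ≤ 2 := hmain

/-- Independent uniform partitioning of `n` users into `k` groups: for any
`β' ∈ (0,1)`, with probability at least `1 - β'` (over the `k^n` equally likely
assignments), `Σ_j ‖f_j - f/k‖₂ ≤ √(nk) + √(2n ln(1/β'))`. -/
theorem delta1_high_probability (n k : ℕ) (hk : 0 < k) {D : Type*} [Fintype D]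
    [DecidableEq D] (v : Fin n → D) (β' : ℝ) (hβ0 : 0 < β') (hβ1 : β' < 1) :
    (1 - β') * (k : ℝ) ^ n ≤
      (Set.ncard {x : Fin n → Fin k |
        ∑ j : Fin k, Real.sqrt (∑ w : D,
          (((Finset.univ.filter fun u => x u = j ∧ v u = w).card : ℝ) -
            ((Finset.univ.filter fun u => v u = w).card : ℝ) / k) ^ 2) ≤
          Real.sqrt ((n : ℝ) * k) + Real.sqrt (2 * n * Real.log (1 / β'))} : ℝ) := by
  classical
  rcases Nat.eq_zero_or_pos n with hn | hn
  · subst hn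
    have hset : {x : Fin 0 → Fin k |
        ∑ j : Fin k, Real.sqrt (∑ w : D,
          (((Finset.univ.filter fun u => x u = j ∧ v u = w).card : ℝ) -
            ((Finset.univ.filter fun u => v u = w).card : ℝ) / k) ^ 2) ≤
          Real.sqrt (((0:ℕ) : ℝ) * k) + Real.sqrt (2 * (0:ℕ) * Real.log (1 / β'))}
        = Set.univ := by
      ext x
      simp only [Set.mem_setOf_eq, Set.mem_univ, iff_true]
      have hz : ∀ j : Fin k, Real.sqrt (∑ w : D,
          (((Finset.univ.filter fun u => x u = j ∧ v u = w).card : ℝ) -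
            ((Finset.univ.filter fun u => v u = w).card : ℝ) / k) ^ 2) = 0 := by
        intro j
        have hterm : ∀ w : D, (((Finset.univ.filter fun u => x u = j ∧ v u = w).card : ℝ) -
            ((Finset.univ.filter fun u => v u = w).card : ℝ) / k) ^ 2 = 0 := by
          intro w
          simp
        rw [Finset.sum_congr rfl fun w _ => hterm w]
        simp
      rw [Finset.sum_congr rfl fun j _ => hz j]
      rw [Finset.sum_const_zero]
      positivity
    rw [hset, Set.ncard_univ, Nat.card_eq_fintype_card]
    have : Fintype.card (Fin 0 → Fin k) = 1 := by simp
    rw [this]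
    norm_num
    nlinarith
  · set t := Real.sqrt (2 * (n:ℝ) * Real.log (1 / β')) with hT
    have hn0 : (0:ℝ) < (n:ℝ) := by exact_mod_cast hn
    have hk0 : (0:ℝ) < (k:ℝ) := by exact_mod_cast hk
    have hlog : 0 < Real.log (1 / β') := by
      rw [one_div, Real.log_inv]
      linarith [Real.log_neg hβ0 hβ1]
    have ht : 0 < t := Real.sqrt_pos.2 (by positivity)
    set B := Real.sqrt ((n:ℝ) * k) + t with hB
    have hsetrw : {x : Fin n → Fin k |
        ∑ j : Fin k, Real.sqrt (∑ w : D,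
          (((Finset.univ.filter fun u => x u = j ∧ v u = w).card : ℝ) -
            ((Finset.univ.filter fun u => v u = w).card : ℝ) / k) ^ 2) ≤ B}
        = {x : Fin n → Fin k | Fdelta n k v x ≤ B} := rfl
    rw [hsetrw]
    have hnc : ({x : Fin n → Fin k | Fdelta n k v x ≤ B}).ncard
        = (Finset.univ.filter (fun x : Fin n → Fin k => Fdelta n k v x ≤ B)).card := by
      rw [Set.ncard_eq_toFinset_card', Set.toFinset_setOf]
    rw [hnc]
    set good := Finset.univ.filter (fun x : Fin n → Fin k => Fdelta n k v x ≤ B) with hgood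
    set bad := Finset.univ.filter (fun x : Fin n → Fin k => ¬ (Fdelta n k v x ≤ B)) with hbad
    have hEFle : (∑ y, Fdelta n k v y) / (k:ℝ) ^ n ≤ Real.sqrt ((n:ℝ) * k) := by
      rw [div_le_iff₀ (by positivity)]
      calc ∑ y, Fdelta n k v y ≤ (k:ℝ) ^ n * Real.sqrt ((n:ℝ) * k) := exp_Fdelta_le hk hn v
        _ = Real.sqrt ((n:ℝ) * k) * (k:ℝ) ^ n := by ring
    have hsub : bad ⊆ Finset.univ.filter
        (fun x : Fin n → Fin k => t ≤ Fdelta n k v x - (∑ y, Fdelta n k v y) / (k:ℝ) ^ n) := by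
      intro x hx
      rw [hbad, Finset.mem_filter] at hx
      rw [Finset.mem_filter]
      refine ⟨Finset.mem_univ x, ?_⟩
      have hlt : B < Fdelta n k v x := not_le.1 hx.2
      rw [hB] at hlt
      linarith
    have hchern := mcdiarmid_count n k hk hn (Fdelta n k v) (Fdelta_bd v) t ht
    have hexpeq : Real.exp (-t ^ 2 / (2 * (n:ℝ))) = β' := by
      rw [hT, Real.sq_sqrt (by positivity)]
      rw [show -(2 * (n:ℝ) * Real.log (1 / β')) / (2 * (n:ℝ)) = -Real.log (1 / β') from by
        field_simp
        ]
      rw [one_div, Real.log_inv, neg_neg, Real.exp_log hβ0]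
    have hbadle : (bad.card : ℝ) ≤ (k:ℝ) ^ n * β' := by
      calc (bad.card : ℝ) ≤ ((Finset.univ.filter
            (fun x : Fin n → Fin k => t ≤ Fdelta n k v x -
              (∑ y, Fdelta n k v y) / (k:ℝ) ^ n)).card : ℝ) := by
            exact_mod_cast Finset.card_le_card hsub
        _ ≤ (k:ℝ) ^ n * Real.exp (-t ^ 2 / (2 * (n:ℝ))) := hchern
        _ = (k:ℝ) ^ n * β' := by rw [hexpeq]
    have hcards : good.card + bad.card = k ^ n := by
      rw [hgood, hbad, Finset.card_filter_add_card_filter_not, Finset.card_univ,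
        Fintype.card_fun, Fintype.card_fin, Fintype.card_fin]
    have hgc : (good.card : ℝ) = (k:ℝ) ^ n - (bad.card : ℝ) := by
      have hcast := congrArg (Nat.cast : ℕ → ℝ) hcards
      push_cast at hcast
      linarith
    rw [hgc]
    nlinarith [hbadle]
end

section
/- (Correctness of prefix-tree search) Let Λ be an alphabet, D = Λ^L, and f: ∪_{τ≤L} Λ^τ → ℝ a frequency function satisfying f(s[1:τ]) ≥ f(s) for every string s and prefix length τ. Suppose estimates f̂ satisfy |f̂(s) − f(s)| ≤ λ for all s in the candidate set Γ = ∪_{0≤τ<L} Γ_τ × Λ, where Γ_0 = {⊥} and Γ_τ = {s ∈ Λ^τ : f(s) ≥ λ}. Define P_0 = {⊥} and P_τ = {s ∈ P_{τ−1} × Λ : f̂(s) ≥ 2λ}. Then for every τ ∈ [L] and s ∈ Λ^τ: (i) if f(s) ≥ 3λ then s ∈ P_τ; (ii) if f(s) < λ then s ∉ P_τ; and consequently P_τ ⊆ Γ_τ. -/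
/-- The search sets of the prefix-tree algorithm: `P_0 = {⊥}` and
`P_{τ+1} = {s ∈ P_τ × Λ : f̂(s) ≥ 2λ}`. -/
def searchSets {Λ : Type*} (fhat : List Λ → ℝ) (lam : ℝ) : ℕ → Set (List Λ)
  | 0 => {[]}
  | τ + 1 => {s | ∃ t ∈ searchSets fhat lam τ, ∃ a : Λ, s = t ++ [a] ∧ 2 * lam ≤ fhat s}

/-- The candidate sets: `Γ_0 = {⊥}` and, for `τ ≥ 1`,
`Γ_τ = {s ∈ Λ^τ : f(s) ≥ λ}`. -/
def candSets {Λ : Type*} (f : List Λ → ℝ) (lam : ℝ) : ℕ → Set (List Λ) := fun τ =>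
  if τ = 0 then {[]} else {s | s.length = τ ∧ lam ≤ f s}

theorem prefix_tree_aux {Λ : Type*} (L : ℕ) (f fhat : List Λ → ℝ)
    (lam : ℝ) (hlam : 0 < lam)
    (hmono : ∀ s t : List Λ, s <+: t → f t ≤ f s)
    (hest : ∀ s : List Λ,
      (∃ τ < L, ∃ t ∈ candSets f lam τ, ∃ a : Λ, s = t ++ [a]) →
        |fhat s - f s| ≤ lam) :
    ∀ τ, τ ≤ L →
      ((∀ s : List Λ, s.length = τ → 3 * lam ≤ f s → s ∈ searchSets fhat lam τ) ∧
        searchSets fhat lam τ ⊆ candSets f lam τ) := by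
  intro τ
  induction τ with
  | zero =>
    intro _
    constructor
    · intro s hs _
      have : s = [] := List.length_eq_zero_iff.mp hs
      simp [searchSets, this]
    · intro s hs
      simpa [candSets, searchSets] using hs
  | succ τ ih =>
    intro hτL
    have hτlt : τ < L := Nat.lt_of_lt_of_le (Nat.lt_succ_self τ) hτL
    obtain ⟨ih1, ih2⟩ := ih (Nat.le_of_lt hτlt)
    constructor
    · intro s hs hf
      have hne : s ≠ [] := by intro h; simp [h] at hs
      have hst : s.dropLast ++ [s.getLast hne] = s := List.dropLast_append_getLast hne
      set t := s.dropLast with ht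
      set a := s.getLast hne with ha
      have hlt : t.length = τ := by
        rw [ht, List.length_dropLast, hs]; omega
      have hft : f s ≤ f t := hmono t s ⟨[a], hst⟩
      have htP : t ∈ searchSets fhat lam τ := ih1 t hlt (le_trans hf hft)
      have htΓ : t ∈ candSets f lam τ := by
        by_cases hτ0 : τ = 0
        · subst hτ0
          have : t = [] := List.length_eq_zero_iff.mp hlt
          simp [candSets, this]
        · simp only [candSets, if_neg hτ0]
          exact ⟨hlt, by linarith⟩
      have hest' : |fhat s - f s| ≤ lam :=
        hest s ⟨τ, hτlt, t, htΓ, a, hst.symm⟩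
      have h2 : 2 * lam ≤ fhat s := by
        have := abs_le.mp hest'
        linarith [this.1]
      exact ⟨t, htP, a, hst.symm, h2⟩
    · intro s hsP
      obtain ⟨t, htP, a, hsa, hfh⟩ := hsP
      have htΓ : t ∈ candSets f lam τ := ih2 htP
      have hlt : t.length = τ := by
        by_cases hτ0 : τ = 0
        · subst hτ0
          have : t = [] := by simpa [searchSets] using htP
          simp [this]
        · simp only [candSets, if_neg hτ0] at htΓ
          exact htΓ.1
      have hest' : |fhat s - f s| ≤ lam :=
        hest s ⟨τ, hτlt, t, htΓ, a, hsa⟩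
      have hfs : lam ≤ f s := by
        have := abs_le.mp hest'
        linarith [this.2]
      simp only [candSets, if_neg (Nat.succ_ne_zero τ)]
      exact ⟨by rw [hsa]; simp [hlt], hfs⟩

/-- Correctness of prefix-tree search: if the frequency function `f` is monotone
under prefixes and the estimates `f̂` are `λ`-accurate on the candidate set
`Γ = ∪_{0 ≤ τ < L} Γ_τ × Λ`, then for every `τ ∈ [L]` and string `s` of length `τ`:
(i) `f(s) ≥ 3λ` implies `s ∈ P_τ`; (ii) `f(s) < λ` implies `s ∉ P_τ`; and
consequently `P_τ ⊆ Γ_τ`. -/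
theorem prefix_tree_search_correct {Λ : Type*} (L : ℕ) (f fhat : List Λ → ℝ)
    (lam : ℝ) (hlam : 0 < lam)
    (hmono : ∀ s t : List Λ, s <+: t → f t ≤ f s)
    (hest : ∀ s : List Λ,
      (∃ τ < L, ∃ t ∈ candSets f lam τ, ∃ a : Λ, s = t ++ [a]) →
        |fhat s - f s| ≤ lam) :
    ∀ τ, 1 ≤ τ → τ ≤ L → ∀ s : List Λ, s.length = τ →
      ((3 * lam ≤ f s → s ∈ searchSets fhat lam τ) ∧
        (f s < lam → s ∉ searchSets fhat lam τ)) ∧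
      searchSets fhat lam τ ⊆ candSets f lam τ := by
  intro τ h1 hL s hs
  obtain ⟨a1, a2⟩ := prefix_tree_aux L f fhat lam hlam hmono hest τ hL
  refine ⟨⟨a1 s hs, ?_⟩, a2⟩
  intro hflt hsP
  have := a2 hsP
  have hτ0 : τ ≠ 0 := by omega
  simp only [candSets, if_neg hτ0] at this
  linarith [this.2]
end
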